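/- Let u₀ and v₀ be twice differentiable real solutions of −y'' + V y = 0 on an interval with Wronskian u₀ v₀' − u₀' v₀ ≡ 1, and set R = √(u₀² + v₀²). Then R satisfies R'' = V·R + R⁻³, i.e., V = R''/R − 1/R⁴, on that interval. -/

import Mathlib

open Real Set

theorem R_second_derivative (a b : ℝ) (V u₀ v₀ : ℝ → ℝ)
    (hV : ContinuousOn V (Ioo a b))
    (hu : Differentiable ℝ u₀) (hu' : Differentiable ℝ (deriv u₀))
    (hv : Differentiable ℝ v₀) (hv' : Differentiable ℝ (deriv v₀))
    (hequ : ∀ x ∈ Ioo a b, deriv (deriv u₀) x = V x * u₀ x)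
    (heqv : ∀ x ∈ Ioo a b, deriv (deriv v₀) x = V x * v₀ x)
    (hW : ∀ x ∈ Ioo a b, u₀ x * deriv v₀ x - deriv u₀ x * v₀ x = 1)
    (hpos : ∀ x ∈ Ioo a b, 0 < u₀ x ^ 2 + v₀ x ^ 2) :
    ∀ x ∈ Ioo a b,
      deriv (deriv (fun t => Real.sqrt (u₀ t ^ 2 + v₀ t ^ 2))) x =
        V x * Real.sqrt (u₀ x ^ 2 + v₀ x ^ 2) + (Real.sqrt (u₀ x ^ 2 + v₀ x ^ 2))⁻¹ ^ 3 := by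
  set f : ℝ → ℝ := fun t => u₀ t ^ 2 + v₀ t ^ 2 with hf
  set g : ℝ → ℝ := fun t => (u₀ t * deriv u₀ t + v₀ t * deriv v₀ t) / Real.sqrt (f t)
    with hgdef
  -- derivative of f
  have hfd : ∀ x : ℝ, HasDerivAt f
      (2 * (u₀ x * deriv u₀ x) + 2 * (v₀ x * deriv v₀ x)) x := by
    intro x
    have h1 : HasDerivAt (fun t => u₀ t ^ 2) (2 * (u₀ x * deriv u₀ x)) x := by
      have := ((hu x).hasDerivAt).fun_pow 2
      simpa [mul_comm, mul_assoc, mul_left_comm] using this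
    have h2 : HasDerivAt (fun t => v₀ t ^ 2) (2 * (v₀ x * deriv v₀ x)) x := by
      have := ((hv x).hasDerivAt).fun_pow 2
      simpa [mul_comm, mul_assoc, mul_left_comm] using this
    exact h1.add h2
  have hR : ∀ x ∈ Ioo a b, HasDerivAt (fun t => Real.sqrt (f t)) (g x) x := by
    intro x hx
    have hne : f x ≠ 0 := ne_of_gt (hpos x hx)
    have := (hfd x).sqrt hne
    convert this using 1
    have hs : Real.sqrt (f x) ≠ 0 := Real.sqrt_ne_zero'.2 (hpos x hx)
    simp only [hgdef]
    field_simp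
  intro x hx
  have hxnhds : Ioo a b ∈ nhds x := isOpen_Ioo.mem_nhds hx
  have hev : (deriv (fun t => Real.sqrt (f t))) =ᶠ[nhds x] g := by
    filter_upwards [hxnhds] with y hy
    exact (hR y hy).deriv
  have hderiv2 : deriv (deriv (fun t => Real.sqrt (f t))) x = deriv g x :=
    hev.deriv_eq
  -- compute deriv g x
  have hs0 : 0 < Real.sqrt (f x) := Real.sqrt_pos.2 (hpos x hx)
  have hsne : Real.sqrt (f x) ≠ 0 := ne_of_gt hs0
  have hn : HasDerivAt (fun t => u₀ t * deriv u₀ t + v₀ t * deriv v₀ t)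
      (deriv u₀ x * deriv u₀ x + u₀ x * deriv (deriv u₀) x +
       (deriv v₀ x * deriv v₀ x + v₀ x * deriv (deriv v₀) x)) x := by
    exact ((hu x).hasDerivAt.mul (hu' x).hasDerivAt).add
      ((hv x).hasDerivAt.mul (hv' x).hasDerivAt)
  have hd : HasDerivAt (fun t => Real.sqrt (f t))
      ((2 * (u₀ x * deriv u₀ x) + 2 * (v₀ x * deriv v₀ x)) / (2 * Real.sqrt (f x))) x :=
    (hfd x).sqrt (ne_of_gt (hpos x hx))
  have hgd := hn.div hd hsne
  have hgx : deriv g x =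
      ((deriv u₀ x * deriv u₀ x + u₀ x * deriv (deriv u₀) x +
        (deriv v₀ x * deriv v₀ x + v₀ x * deriv (deriv v₀) x)) * Real.sqrt (f x) -
       (u₀ x * deriv u₀ x + v₀ x * deriv v₀ x) *
        ((2 * (u₀ x * deriv u₀ x) + 2 * (v₀ x * deriv v₀ x)) / (2 * Real.sqrt (f x)))) /
      Real.sqrt (f x) ^ 2 := hgd.deriv
  rw [show (fun t => Real.sqrt (u₀ t ^ 2 + v₀ t ^ 2)) = (fun t => Real.sqrt (f t)) from rfl,
    hderiv2, hgx, hequ x hx, heqv x hx]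
  have hsq : Real.sqrt (f x) ^ 2 = f x := Real.sq_sqrt (le_of_lt (hpos x hx))
  have hW' := hW x hx
  have hfx : f x = u₀ x ^ 2 + v₀ x ^ 2 := rfl
  set s := Real.sqrt (f x)
  have hsq2 : s ^ 2 = u₀ x ^ 2 + v₀ x ^ 2 := hsq
  field_simp
  linear_combination (u₀ x * deriv v₀ x - deriv u₀ x * v₀ x + 1) * hW' +
    (deriv u₀ x ^ 2 + deriv v₀ x ^ 2 - V x * s ^ 2) * hsq2
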